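/- Let f : ℝⁿ → ℝ be locally Lipschitz and path differentiable. Let γ : [a,b] → ℝⁿ be a Lipschitz curve such that −γ'(t) ∈ ∂ᶜf(γ(t)) for almost every t ∈ [a,b]. Then −∫_a^b ‖γ'(t)‖² dt = f(γ(b)) − f(γ(a)). -/

import Mathlib

open MeasureTheory Filter

/-- The Clarke subdifferential of `f : ℝⁿ → ℝ`: the closed convex hull of all limits of
gradients of `f` at nearby differentiability points. -/
noncomputable def clarkeSubdiff {n : ℕ} (f : EuclideanSpace ℝ (Fin n) → ℝ)
    (x : EuclideanSpace ℝ (Fin n)) : Set (EuclideanSpace ℝ (Fin n)) :=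
  closure (convexHull ℝ
    {v | ∃ y : ℕ → EuclideanSpace ℝ (Fin n),
      (∀ k, DifferentiableAt ℝ f (y k)) ∧
      Tendsto y atTop (nhds x) ∧
      Tendsto (fun k => gradient f (y k)) atTop (nhds v)})

/-- `f` is path differentiable: along every Lipschitz curve `γ`, for a.e. `t` the curve
is differentiable at `t`, and `f ∘ γ` is differentiable at `t` with derivative
`⟪v, γ′(t)⟫` for every Clarke subgradient `v ∈ ∂ᶜf(γ t)`. -/
def PathDifferentiable {n : ℕ} (f : EuclideanSpace ℝ (Fin n) → ℝ) : Prop :=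
  ∀ (γ : ℝ → EuclideanSpace ℝ (Fin n)) (K : NNReal), LipschitzWith K γ →
    ∀ᵐ t : ℝ, ∃ d : EuclideanSpace ℝ (Fin n), HasDerivAt γ d t ∧
      ∀ v ∈ clarkeSubdiff f (γ t), HasDerivAt (f ∘ γ) (inner ℝ v d : ℝ) t

open Set Metric intervalIntegral


lemma lipOn_weaken {g : ℝ → ℝ} {K K' : NNReal} {s : Set ℝ} (h : LipschitzOnWith K g s)
    (hK : K ≤ K') : LipschitzOnWith K' g s :=
  LipschitzOnWith.of_dist_le_mul fun x hx y hy =>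
    (h.dist_le_mul x hx y hy).trans
      (mul_le_mul_of_nonneg_right (by exact_mod_cast hK) dist_nonneg)

lemma unif_lip {g : ℝ → ℝ} (hg : LocallyLipschitz g) {s : Set ℝ} (hs : IsCompact s) :
    ∃ K : NNReal, ∀ x ∈ s, ∃ ε > 0, LipschitzOnWith K g (ball x ε) := by
  have H : ∀ x : ℝ, ∃ r : ℝ, ∃ Kx : NNReal, 0 < r ∧ LipschitzOnWith Kx g (ball x r) := by
    intro x
    obtain ⟨Kx, t, ht, hlip⟩ := hg x
    obtain ⟨r, hr, hball⟩ := Metric.mem_nhds_iff.1 ht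
    exact ⟨r, Kx, hr, hlip.mono hball⟩
  choose r Kx hr hlip using H
  obtain ⟨t, hts, hcov⟩ := hs.elim_nhds_subcover (fun x => ball x (r x))
    (fun x _ => ball_mem_nhds x (hr x))
  refine ⟨t.sup Kx, fun x hx => ?_⟩
  obtain ⟨i, hi, hxi⟩ := Set.mem_iUnion₂.1 (hcov hx)
  obtain ⟨ε, hε, hball⟩ := Metric.mem_nhds_iff.1 ((isOpen_ball).mem_nhds hxi)
  exact ⟨ε, hε, lipOn_weaken ((hlip i).mono hball) (Finset.le_sup hi)⟩

lemma lip_on_Icc {g : ℝ → ℝ} (hg : LocallyLipschitz g) (c d : ℝ) :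
    ∃ K : NNReal, LipschitzOnWith K g (Icc c d) := by
  obtain ⟨K, hK⟩ := unif_lip hg (isCompact_Icc (a := c) (b := d))
  refine ⟨K, LipschitzOnWith.of_dist_le_mul fun x hx y hy => ?_⟩
  -- wlog x ≤ y
  have main : ∀ s ∈ Icc c d, ∀ t ∈ Icc c d, s ≤ t → dist (g t) (g s) ≤ K * (t - s) := by
    intro s hs t ht hst
    have hsub : Icc s d ⊆ Icc c d := Icc_subset_Icc hs.1 le_rfl
    have : Icc s d ⊆ {u | dist (g u) (g s) ≤ K * (u - s)} := by
      apply IsClosed.Icc_subset_of_forall_exists_gt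
      · exact (isClosed_le (hg.continuous.dist continuous_const)
          (by fun_prop)).inter isClosed_Icc
      · simp
      · rintro x ⟨hxA, hx⟩ y hy
        obtain ⟨ε, hε, hlip⟩ := hK x (hsub ⟨hx.1, hx.2.le⟩)
        set u := min (min y d) (x + ε / 2) with hu
        have hux : x < u := lt_min (lt_min hy hx.2) (by linarith)
        have huy : u ≤ y := le_trans (min_le_left _ _) (min_le_left _ _)
        have hud : dist u x < ε := by
          rw [Real.dist_eq, abs_of_pos (by linarith)]
          have : u ≤ x + ε / 2 := min_le_right _ _
          linarith
        refine ⟨u, ?_, hux, huy⟩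
        have h1 : dist (g u) (g x) ≤ K * (u - x) := by
          have := hlip.dist_le_mul u (by simpa using hud) x (by simp [hε])
          rwa [Real.dist_eq (x := u), abs_of_pos (by linarith)] at this
        calc dist (g u) (g s) ≤ dist (g u) (g x) + dist (g x) (g s) := dist_triangle _ _ _
          _ ≤ K * (u - x) + K * (x - s) := add_le_add h1 hxA
          _ = K * (u - s) := by ring
    have := this ⟨hst, ht.2⟩
    simpa using this
  rcases le_total x y with h | h
  · calc dist (g x) (g y) = dist (g y) (g x) := dist_comm _ _
      _ ≤ K * (y - x) := main x hx y hy h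
      _ = K * dist x y := by rw [Real.dist_eq, abs_of_nonpos (by linarith)]; ring
  · calc dist (g x) (g y) ≤ K * (x - y) := main y hy x hx h
      _ = K * dist x y := by rw [Real.dist_eq, abs_of_nonneg (by linarith)]


lemma slope_seq_tendsto {g : ℝ → ℝ} {c v : ℝ} (h : HasDerivAt g v c)
    {δ : ℕ → ℝ} (hpos : ∀ k, 0 < δ k) (h0 : Tendsto δ atTop (nhds 0)) :
    Tendsto (fun k => (g (c + δ k) - g c) / δ k) atTop (nhds v) := by
  have hseq : Tendsto (fun k => c + δ k) atTop (nhdsWithin c {c}ᶜ) := by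
    apply tendsto_nhdsWithin_of_tendsto_nhds_of_eventually_within
    · simpa using tendsto_const_nhds.add h0
    · exact Eventually.of_forall fun k => by simpa using (hpos k).ne'
  have := (hasDerivAt_iff_tendsto_slope.1 h).comp hseq
  convert this using 2 with k
  simp [slope, div_eq_inv_mul]

lemma ftc_lip {g φ : ℝ → ℝ} {a b : ℝ} (hab : a ≤ b) (hg : Continuous g)
    {L : NNReal} (hL : LipschitzOnWith L g (Icc a (b + 1)))
    (hφ : ∀ᵐ t : ℝ, t ∈ Ioc a b → HasDerivAt g (φ t) t) :
    ∫ t in a..b, φ t = g b - g a := by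
  set δ : ℕ → ℝ := fun k => ((k : ℝ) + 1)⁻¹ with hδ
  have hpos : ∀ k, 0 < δ k := fun k => by positivity
  have hle1 : ∀ k, δ k ≤ 1 := fun k => by
    rw [hδ]; rw [inv_le_one_iff₀]; right; simp [Nat.cast_nonneg]
  have h0 : Tendsto δ atTop (nhds 0) := by
    simpa [hδ, one_div] using tendsto_one_div_add_atTop_nhds_zero_nat (𝕜 := ℝ)
  set F : ℕ → ℝ → ℝ := fun k t => (g (t + δ k) - g t) / δ k with hF
  set μ := volume.restrict (Ioc a b) with hμ
  -- dominated convergence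
  have hdct : Tendsto (fun k => ∫ t, F k t ∂μ) atTop (nhds (∫ t, φ t ∂μ)) := by
    apply tendsto_integral_of_dominated_convergence (fun _ => (L : ℝ))
    · intro k
      exact (((hg.comp (continuous_id.add continuous_const)).sub hg).div_const _).aestronglyMeasurable
    · rw [hμ]
      exact integrableOn_const (hs := measure_Ioc_lt_top.ne)
    · intro k
      rw [hμ]
      filter_upwards [ae_restrict_mem measurableSet_Ioc] with t ht
      have h1 : t ∈ Icc a (b + 1) := ⟨ht.1.le, by linarith [ht.2]⟩
      have h2 : t + δ k ∈ Icc a (b + 1) := by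
        constructor
        · linarith [ht.1.le, (hpos k).le]
        · linarith [ht.2, hle1 k]
      have := hL.dist_le_mul _ h2 _ h1
      rw [Real.dist_eq, Real.dist_eq, add_sub_cancel_left, abs_of_pos (hpos k)] at this
      rw [hF]
      simp only [norm_div, Real.norm_eq_abs, abs_of_pos (hpos k)]
      rw [div_le_iff₀ (hpos k)]
      exact this
    · rw [hμ]
      filter_upwards [ae_restrict_mem measurableSet_Ioc, ae_restrict_of_ae hφ] with t ht hder
      exact slope_seq_tendsto (hder ht) hpos h0
  -- compute the integrals of F k
  have hgint : ∀ c d : ℝ, IntervalIntegrable g volume c d := fun c d => hg.intervalIntegrable c d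
  have key : ∀ k, ∫ t, F k t ∂μ =
      (∫ u in b..(b + δ k), g u) / δ k - (∫ u in a..(a + δ k), g u) / δ k := by
    intro k
    have e1 : ∫ t, F k t ∂μ = ∫ t in a..b, F k t := (integral_of_le hab).symm
    have e2 : ∫ t in a..b, F k t
        = ((∫ t in a..b, g (t + δ k)) - ∫ t in a..b, g t) / δ k := by
      have hc : Continuous fun t : ℝ => g (t + δ k) := hg.comp (continuous_add_right _)
      rw [← integral_sub (hc.intervalIntegrable a b) (hgint a b), ← intervalIntegral.integral_div]
    have e3 : (∫ t in a..b, g (t + δ k)) = ∫ u in (a + δ k)..(b + δ k), g u :=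
      integral_comp_add_right g (δ k)
    have e4 : (∫ u in (a + δ k)..b, g u) + (∫ u in b..(b + δ k), g u)
        = ∫ u in (a + δ k)..(b + δ k), g u :=
      integral_add_adjacent_intervals (hgint _ _) (hgint _ _)
    have e5 : (∫ u in a..(a + δ k), g u) + (∫ u in (a + δ k)..b, g u)
        = ∫ u in a..b, g u :=
      integral_add_adjacent_intervals (hgint _ _) (hgint _ _)
    rw [e1, e2, e3, ← e4, ← e5]
    ring
  -- limit of the right-hand side
  have hlim : ∀ c : ℝ, Tendsto (fun k => (∫ u in c..(c + δ k), g u) / δ k)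
      atTop (nhds (g c)) := by
    intro c
    have hd : HasDerivAt (fun u => ∫ x in c..u, g x) (g c) c :=
      (hg.integral_hasStrictDerivAt c c).hasDerivAt
    have := slope_seq_tendsto hd hpos h0
    simpa using this
  have h2 : Tendsto (fun k => ∫ t, F k t ∂μ) atTop (nhds (g b - g a)) := by
    simp only [key]
    exact (hlim b).sub (hlim a)
  have : ∫ t, φ t ∂μ = g b - g a := tendsto_nhds_unique hdct h2
  rw [integral_of_le hab]
  exact this

/-- (Descent identity.) If `f` is locally Lipschitz and path
differentiable and `γ : [a,b] → ℝⁿ` is a Lipschitz curve with `−γ′(t) ∈ ∂ᶜf(γ t)`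
for a.e. `t ∈ [a,b]`, then `−∫_a^b ‖γ′(t)‖² dt = f(γ b) − f(γ a)`. -/
theorem stmt7 {n : ℕ} (f : EuclideanSpace ℝ (Fin n) → ℝ)
    (hf_lip : LocallyLipschitz f) (hf_pd : PathDifferentiable f)
    (a b : ℝ) (hab : a ≤ b)
    (γ γ' : ℝ → EuclideanSpace ℝ (Fin n)) (K : NNReal) (hγ : LipschitzWith K γ)
    (hder : ∀ᵐ t : ℝ, t ∈ Set.Icc a b →
      HasDerivAt γ (γ' t) t ∧ -γ' t ∈ clarkeSubdiff f (γ t)) :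
    -∫ t in a..b, ‖γ' t‖ ^ 2 = f (γ b) - f (γ a) := by
  have hg : LocallyLipschitz (f ∘ γ) := hf_lip.comp hγ.locallyLipschitz
  obtain ⟨L, hL⟩ := lip_on_Icc hg a (b + 1)
  have hae : ∀ᵐ t : ℝ, t ∈ Set.Ioc a b →
      HasDerivAt (f ∘ γ) ((fun t => -‖γ' t‖ ^ 2) t) t := by
    filter_upwards [hder, hf_pd γ K hγ] with t h1 h2 ht
    obtain ⟨hdγ, hmem⟩ := h1 (Set.Ioc_subset_Icc_self ht)
    obtain ⟨d, hd, hfd⟩ := h2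
    have hdd : d = γ' t := hd.unique hdγ
    have := hfd (-γ' t) hmem
    rw [hdd, inner_neg_left, real_inner_self_eq_norm_sq] at this
    exact this
  have := ftc_lip hab hg.continuous hL hae
  rw [intervalIntegral.integral_neg] at this
  simpa using this
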